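/- Let p(n) denote the number of distinct factors of length n of the infinite Fibonacci word (the fixed point of the substitution 1 → 10, 0 → 1). Then p(n) = n + 1 for all n ≥ 1. -/

import Mathlib

/-- The Fibonacci substitution σ(1) = 10, σ(0) = 1 on words over {0,1},
with 1 = `true` and 0 = `false`, extended to words by concatenation. -/
def fibSub (w : List Bool) : List Bool :=
  (w.map fun b => if b then [true, false] else [true]).flatten

/-- The infinite Fibonacci word, the fixed point of σ starting with 1:
its n-th letter stabilizes in σ^[n+1](1), whose length exceeds n. -/
def fibWord (n : ℕ) : Bool := (fibSub^[n + 1] [true]).getD n true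


noncomputable def al : ℝ := (Real.sqrt 5 - 1) / 2

lemma sqrt5_sq : Real.sqrt 5 ^ 2 = 5 := Real.sq_sqrt (by norm_num)
lemma sqrt5_lb : 2.2 < Real.sqrt 5 := by
  nlinarith [Real.sqrt_nonneg 5, sqrt5_sq]
lemma sqrt5_ub : Real.sqrt 5 < 2.31 := by
  nlinarith [Real.sqrt_nonneg 5, sqrt5_sq]
lemma al_lb : 0.6 < al := by unfold al; linarith [sqrt5_lb]
lemma al_ub : al < 0.66 := by unfold al; linarith [sqrt5_ub]
lemma al_pos : 0 < al := by linarith [al_lb]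
lemma al_lt_one : al < 1 := by linarith [al_ub]
lemma al_nonneg : 0 ≤ al := le_of_lt al_pos
lemma al_le_one : al ≤ 1 := le_of_lt al_lt_one
lemma al_sq : al ^ 2 = 1 - al := by
  unfold al; nlinarith [sqrt5_sq]
lemma al_irr : Irrational al := by
  have h5 := Nat.Prime.irrational_sqrt (show Nat.Prime 5 by norm_num)
  have : Irrational (Real.sqrt 5 - (1:ℤ)) := h5.sub_intCast 1
  have := this.div_intCast (m := 2) (by norm_num)
  simpa [al] using this

/-- natural multiples of al are not integers -/
lemma al_nz (r : ℕ) (hr : r ≠ 0) (m : ℤ) : (r : ℝ) * al ≠ (m : ℝ) := by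
  exact (al_irr.natCast_mul hr).ne_int m

lemma two_step {P : ℕ → Prop} (h0 : P 0) (h1 : P 1)
    (h : ∀ k, P k → P (k + 1) → P (k + 2)) : ∀ k, P k := by
  have H : ∀ k, P k ∧ P (k+1) := by
    intro k
    induction k with
    | zero => exact ⟨h0, h1⟩
    | succ n ih => exact ⟨ih.2, h n ih.1 ih.2⟩
  exact fun k => (H k).1

lemma fib_al : ∀ k : ℕ, (Nat.fib (k+1) : ℝ) * al = (Nat.fib k : ℝ) + (-1)^k * al^(k+1) := by
  apply two_step
  · simp
  · push_cast [Nat.fib_two]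
    ring_nf
    nlinarith [al_sq]
  · intro k h1 h2
    have hf : (Nat.fib (k+3) : ℝ) = Nat.fib (k+2) + Nat.fib (k+1) := by
      push_cast [Nat.fib_add_two]; ring
    have hf2 : (Nat.fib (k+2) : ℝ) = Nat.fib (k+1) + Nat.fib k := by
      push_cast [Nat.fib_add_two]; ring
    have e1 : al ^ (k+3) = al ^ (k+1) * al ^ 2 := by ring
    have e2 : al ^ (k+2) = al ^ (k+1) * al := by ring
    linear_combination al * hf + h1 + h2 - hf2 - (-1:ℝ)^k * al^(k+1) * al_sq

lemma fract_add_eps {x ε : ℝ} (h0 : 0 ≤ Int.fract x + ε) (h1 : Int.fract x + ε < 1) :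
    Int.fract (x + ε) = Int.fract x + ε := by
  have hx : x + ε = (⌊x⌋ : ℝ) + (Int.fract x + ε) := by
    have := Int.floor_add_fract x; linarith
  rw [hx, Int.fract_intCast_add, Int.fract_eq_self.mpr ⟨h0, h1⟩]

lemma pow_anti {m n : ℕ} (h : m ≤ n) : al ^ n ≤ al ^ m :=
  pow_le_pow_of_le_one (le_of_lt al_pos) (le_of_lt al_lt_one) h

lemma al_pow_pos (n : ℕ) : 0 < al ^ n := pow_pos al_pos n

lemma al_cube : al^3 = 2*al - 1 := by
  linear_combination (al - 1) * al_sq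

lemma fract_bounds : ∀ k : ℕ, ∀ r : ℕ, 1 ≤ r → r ≤ Nat.fib (k+2) →
    al^(k+2) ≤ Int.fract ((r:ℝ) * al) ∧ Int.fract ((r:ℝ) * al) ≤ 1 - al^(k+2) := by
  have hfr1 : Int.fract (((1:ℕ):ℝ) * al) = al := by
    push_cast
    rw [one_mul, Int.fract_eq_self.mpr ⟨le_of_lt al_pos, al_lt_one⟩]
  apply two_step
  · intro r h1 h2
    have : r = 1 := le_antisymm (by simpa [Nat.fib_two] using h2) h1
    subst this
    rw [hfr1]
    have e : al^(0+2) = al^2 := rfl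
    rw [e]
    constructor <;> nlinarith [al_sq, al_lb, al_ub]
  · intro r h1 h2
    have h3 : Nat.fib 3 = 2 := by decide
    rw [h3] at h2
    have e : al^(1+2) = al^3 := rfl
    interval_cases r
    · rw [hfr1, e, al_cube]
      constructor <;> linarith [al_lb, al_ub]
    · have hfr : Int.fract (((2:ℕ):ℝ) * al) = 2 * al - 1 := by
        push_cast
        have hfl : ⌊(2:ℝ) * al⌋ = 1 := by
          rw [Int.floor_eq_iff] <;> push_cast <;> constructor <;> nlinarith [al_lb, al_ub]
        rw [Int.fract, hfl]
        norm_num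
      rw [hfr, e, al_cube]
      constructor <;> linarith [al_lb, al_ub]
  · intro k ih1 ih2 r h1 h2
    have h2' : r ≤ Nat.fib (k+4) := h2
    by_cases hc : r ≤ Nat.fib (k+3)
    · obtain ⟨ha, hb⟩ := ih2 r h1 hc
      have hp : al ^ (k+2+2) ≤ al ^ (k+1+2) := pow_anti (by omega)
      exact ⟨le_trans hp ha, le_trans hb (by linarith)⟩
    · push_neg at hc
      set s : ℕ := r - Nat.fib (k+3) with hs
      have hf4 : Nat.fib (k+4) = Nat.fib (k+2) + Nat.fib (k+3) := Nat.fib_add_two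
      have hs1 : 1 ≤ s := by omega
      have hs2 : s ≤ Nat.fib (k+2) := by omega
      obtain ⟨ha, hb⟩ := ih1 s hs1 hs2
      have hfrpos := Int.fract_nonneg ((s:ℝ) * al)
      have hfrlt := Int.fract_lt_one ((s:ℝ) * al)
      have hr : (r:ℝ) * al = ((s:ℝ) * al + (-1)^k * al^(k+3)) + (Nat.fib (k+2) : ℕ) := by
        have hcast : (r:ℝ) = (s:ℝ) + (Nat.fib (k+3) : ℝ) := by
          have : r = s + Nat.fib (k+3) := by omega
          rw [this]; push_cast; ring
        rw [hcast, add_mul, fib_al (k+2)]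
        have : ((-1:ℝ))^(k+2) = (-1)^k := by ring
        rw [this]; ring
      rw [hr, Int.fract_add_natCast]
      have hsplit : al^(k+2) = al^(k+3) + al^(k+2+2) := by
        have e1 : al^(k+2+2) = al^(k+2) * al^2 := by ring
        have e2 : al^(k+3) = al^(k+2) * al := by ring
        rw [e1, e2, al_sq]; ring
      have hpp := al_pow_pos (k+2+2)
      have hp3 := al_pow_pos (k+3)
      rcases Nat.even_or_odd k with he | ho
      · have hpk : ((-1:ℝ))^k = 1 := he.neg_one_pow
        rw [hpk, one_mul]
        rw [fract_add_eps (by linarith) (by linarith)]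
        constructor
        · linarith
        · linarith
      · have hpk : ((-1:ℝ))^k = -1 := ho.neg_one_pow
        rw [hpk, neg_one_mul, ← sub_eq_add_neg]
        rw [show (s:ℝ) * al - al^(k+3) = (s:ℝ)*al + (-(al^(k+3))) from by ring]
        rw [fract_add_eps (by linarith) (by linarith)]
        constructor
        · linarith
        · linarith

noncomputable def tw (n : ℕ) : Bool :=
  decide (⌊((n:ℝ) + 2) * al⌋ = ⌊((n:ℝ) + 1) * al⌋ + 1)

lemma floor_add_eps {x ε : ℝ} (h0 : 0 ≤ Int.fract x + ε) (h1 : Int.fract x + ε < 1) :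
    ⌊x + ε⌋ = ⌊x⌋ := by
  have hx : x + ε = (⌊x⌋ : ℝ) + (Int.fract x + ε) := by
    have := Int.floor_add_fract x; linarith
  rw [hx, Int.floor_intCast_add, Int.floor_eq_zero_iff.mpr ⟨h0, h1⟩, add_zero]

lemma floor_shift (k : ℕ) (r : ℕ) (h1 : 1 ≤ r) (h2 : r ≤ Nat.fib (k+2) + 1) :
    ⌊(r:ℝ) * al + (-1)^k * al^(k+3)⌋ = ⌊(r:ℝ) * al⌋ := by
  have hr3 : r ≤ Nat.fib (k+3) := by
    have h1' : 1 ≤ Nat.fib (k+1) := Nat.fib_pos.mpr (by omega)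
    have : Nat.fib (k+3) = Nat.fib (k+1) + Nat.fib (k+2) := Nat.fib_add_two
    omega
  obtain ⟨ha, hb⟩ := fract_bounds (k+1) r h1 hr3
  have hp3 := al_pow_pos (k+3)
  rcases Nat.even_or_odd k with he | ho
  · have hpk : ((-1:ℝ))^k = 1 := he.neg_one_pow
    rw [hpk, one_mul]
    have hne : Int.fract ((r:ℝ)*al) ≠ 1 - al^(k+3) := by
      intro heq
      have hfib : (Nat.fib (k+3):ℝ) * al = (Nat.fib (k+2):ℝ) + (-1)^(k+2) * al^(k+3) :=
        fib_al (k+2)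
      have hpk2 : ((-1:ℝ))^(k+2) = 1 := by rw [show k+2 = k+1+1 from rfl]; ring_nf; rw [hpk]
      rw [hpk2, one_mul] at hfib
      have hful := Int.floor_add_fract ((r:ℝ)*al)
      have : ((r + Nat.fib (k+3) : ℕ):ℝ) * al = ((⌊(r:ℝ)*al⌋ + 1 + Nat.fib (k+2) : ℤ):ℝ) := by
        push_cast
        linarith
      exact al_nz (r + Nat.fib (k+3)) (by omega) _ this
    apply floor_add_eps
    · have := Int.fract_nonneg ((r:ℝ)*al); linarith
    · have : Int.fract ((r:ℝ)*al) < 1 - al^(k+3) := lt_of_le_of_ne hb hne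
      linarith
  · have hpk : ((-1:ℝ))^k = -1 := ho.neg_one_pow
    rw [hpk, neg_one_mul, ← sub_eq_add_neg, show (r:ℝ)*al - al^(k+3) = (r:ℝ)*al + (-(al^(k+3))) from by ring]
    apply floor_add_eps
    · linarith
    · have := Int.fract_lt_one ((r:ℝ)*al); linarith

lemma tw_shift (k m : ℕ) (hm : m < Nat.fib (k+2)) : tw (m + Nat.fib (k+3)) = tw m := by
  have hfib : (Nat.fib (k+3):ℝ) * al = (Nat.fib (k+2):ℝ) + (-1)^(k+2) * al^(k+3) :=
    fib_al (k+2)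
  have key : ∀ j : ℝ, ∀ jn : ℕ, j = (jn:ℝ) → 1 ≤ jn → jn ≤ 2 →
      ⌊(((m + Nat.fib (k+3) : ℕ):ℝ) + j) * al⌋ = ⌊((m:ℝ) + j) * al⌋ + (Nat.fib (k+2) : ℤ) := by
    intro j jn hj hj1 hj2
    have e : (((m + Nat.fib (k+3) : ℕ):ℝ) + j) * al
        = (((m + jn : ℕ):ℝ) * al + (-1)^k * al^(k+3)) + ((Nat.fib (k+2) : ℤ):ℝ) := by
      subst hj
      push_cast
      linear_combination hfib
    rw [e, Int.floor_add_intCast, floor_shift k (m+jn) (by omega) (by omega)]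
    subst hj
    push_cast
    ring_nf
  have k1 := key 1 1 (by norm_num) (by norm_num) (by norm_num)
  have k2 := key 2 2 (by norm_num) (by norm_num) (by norm_num)
  unfold tw
  rw [k1, k2]
  exact decide_eq_decide.mpr (by omega)

lemma fibSub_append (u v : List Bool) : fibSub (u ++ v) = fibSub u ++ fibSub v := by
  simp [fibSub]

lemma p_rec : ∀ k, fibSub^[k+2] [true] = fibSub^[k+1] [true] ++ fibSub^[k] [true] := by
  intro k
  induction k with
  | zero => decide
  | succ n ih =>
    show fibSub^[n+3] [true] = fibSub^[n+2] [true] ++ fibSub^[n+1] [true]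
    calc fibSub^[n+3] [true] = fibSub (fibSub^[n+2] [true]) :=
          Function.iterate_succ_apply' fibSub (n+2) [true]
      _ = fibSub (fibSub^[n+1] [true]) ++ fibSub (fibSub^[n] [true]) := by
          rw [ih, fibSub_append]
      _ = fibSub^[n+2] [true] ++ fibSub^[n+1] [true] := by
          exact congrArg₂ (· ++ ·) (Function.iterate_succ_apply' fibSub (n+1) [true]).symm
            (Function.iterate_succ_apply' fibSub n [true]).symm

lemma p_len : ∀ k, (fibSub^[k] [true]).length = Nat.fib (k+2) := by
  apply two_step
  · decide
  · decide
  · intro k h1 h2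
    rw [p_rec k, List.length_append, h1, h2]
    have hf : Nat.fib (k+2+2) = Nat.fib (k+2) + Nat.fib (k+2+1) := Nat.fib_add_two
    have e : Nat.fib (k+1+2) = Nat.fib (k+2+1) := rfl
    omega

lemma p_prefix (k : ℕ) : fibSub^[k] [true] <+: fibSub^[k+1] [true] := by
  cases k with
  | zero => exact ⟨[false], by decide⟩
  | succ n => exact ⟨fibSub^[n] [true], (p_rec n).symm⟩

lemma p_prefix_le {k m : ℕ} (h : k ≤ m) : fibSub^[k] [true] <+: fibSub^[m] [true] := by
  induction m with
  | zero => cases Nat.le_zero.mp h; exact List.prefix_refl _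
  | succ n ih =>
    rcases Nat.lt_or_ge k (n+1) with hlt | hge
    · exact (ih (by omega)).trans (p_prefix n)
    · have : k = n+1 := by omega
      subst this; exact List.prefix_refl _

lemma getD_prefix {u v : List Bool} (h : u <+: v) {n : ℕ} (hn : n < u.length) :
    v.getD n true = u.getD n true := by
  obtain ⟨w, rfl⟩ := h
  exact List.getD_append u w true n hn

lemma fibWord_eq_p {k n : ℕ} (hn : n < Nat.fib (k+2)) :
    fibWord n = (fibSub^[k] [true]).getD n true := by
  have hfw : ∀ j, j < Nat.fib (j+3) := by
    intro j
    induction j with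
    | zero => decide
    | succ i ih =>
      have h1 : 1 ≤ Nat.fib (i+2) := Nat.fib_pos.mpr (by omega)
      have h2 : Nat.fib (i+4) = Nat.fib (i+2) + Nat.fib (i+3) := Nat.fib_add_two
      have e : Nat.fib (i+1+3) = Nat.fib (i+4) := rfl
      omega
  unfold fibWord
  rcases Nat.le_total (n+1) k with h | h
  · rw [getD_prefix (p_prefix_le h) (by rw [p_len]; exact hfw n)]
  · rw [getD_prefix (p_prefix_le h) (by rw [p_len]; exact hn)]

lemma bridge : ∀ k, ∀ n, n < Nat.fib (k+2) → (fibSub^[k] [true]).getD n true = tw n := by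
  have fl1 : ⌊al⌋ = 0 := by
    rw [Int.floor_eq_zero_iff]
    constructor
    · linarith [al_lb]
    · simpa using al_lt_one
  have fl2 : ⌊(2:ℝ)*al⌋ = 1 := by
    rw [Int.floor_eq_iff]
    constructor <;> push_cast <;> nlinarith [al_lb, al_ub]
  have fl3 : ⌊(3:ℝ)*al⌋ = 1 := by
    rw [Int.floor_eq_iff]
    constructor <;> push_cast <;> nlinarith [al_lb, al_ub]
  have tw0 : tw 0 = true := by
    have : ((0:ℕ):ℝ) = 0 := by norm_num
    unfold tw
    rw [this]
    norm_num [fl2, show ((1:ℝ))*al = al from one_mul al, fl1]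
  have tw1 : tw 1 = false := by
    have : ((1:ℕ):ℝ) = 1 := by norm_num
    unfold tw
    rw [this]
    norm_num [fl3, fl2]
  apply two_step
  · intro n hn
    have : n = 0 := by simpa [Nat.fib_two] using hn
    subst this
    rw [tw0]; decide
  · intro n hn
    have h3 : Nat.fib 3 = 2 := by decide
    rw [h3] at hn
    interval_cases n
    · rw [tw0]; decide
    · rw [tw1]; decide
  · intro k ih1 ih2 n hn
    rw [p_rec k]
    have hlen : (fibSub^[k+1] [true]).length = Nat.fib (k+3) := p_len (k+1)
    rcases Nat.lt_or_ge n (Nat.fib (k+3)) with hlt | hge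
    · rw [List.getD_append _ _ _ _ (by rw [hlen]; exact hlt)]
      exact ih2 n hlt
    · rw [List.getD_append_right _ _ _ _ (by rw [hlen]; exact hge), hlen]
      set m := n - Nat.fib (k+3) with hm
      have hmlt : m < Nat.fib (k+2) := by
        have : Nat.fib (k+4) = Nat.fib (k+2) + Nat.fib (k+3) := Nat.fib_add_two
        have hn' : n < Nat.fib (k+4) := hn
        omega
      rw [ih1 m hmlt]
      have : n = m + Nat.fib (k+3) := by omega
      rw [this, tw_shift k m hmlt]

lemma fibWord_eq_tw (n : ℕ) : fibWord n = tw n := by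
  have hfw : ∀ j : ℕ, j < Nat.fib (j+3) := by
    intro j
    induction j with
    | zero => decide
    | succ i ih =>
      have h1 : 1 ≤ Nat.fib (i+2) := Nat.fib_pos.mpr (by omega)
      have h2 : Nat.fib (i+4) = Nat.fib (i+2) + Nat.fib (i+3) := Nat.fib_add_two
      have e : Nat.fib (i+1+3) = Nat.fib (i+4) := rfl
      omega
  rw [fibWord_eq_p (k := n+1) (hfw n), bridge (n+1) n (hfw n)]

noncomputable def letterF (x : ℝ) (j : ℕ) : Bool :=
  decide (⌊x + ((j:ℝ) + 1) * al⌋ = ⌊x + (j:ℝ) * al⌋ + 1)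

noncomputable def V (n : ℕ) (x : ℝ) : List Bool := (List.range n).map (letterF x)

noncomputable def ee (j : ℕ) : ℝ := 1 - Int.fract ((j:ℝ) * al)

noncomputable def TT (n : ℕ) : Finset ℝ := insert 0 ((Finset.Icc 1 n).image ee)

lemma fract_floor (y z : ℝ) : ⌊Int.fract y + z⌋ = ⌊y + z⌋ - ⌊y⌋ := by
  have h : Int.fract y + z = (y + z) - (⌊y⌋ : ℝ) := by
    have := Int.floor_add_fract y; linarith
  rw [h, Int.floor_sub_intCast]

/-- the word of the fibonacci word at position i equals V at the fract point -/
lemma w_eq (n i : ℕ) :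
    ((List.range n).map fun j => tw (i + j)) = V n (Int.fract (((i:ℝ) + 1) * al)) := by
  unfold V
  apply List.map_congr_left
  intro j _
  set y := ((i:ℝ) + 1) * al with hy
  have A : ⌊Int.fract y + ((j:ℝ) + 1) * al⌋ = ⌊(((i + j:ℕ):ℝ) + 2) * al⌋ - ⌊y⌋ := by
    rw [fract_floor]
    have e : y + ((j:ℝ) + 1) * al = (((i + j:ℕ):ℝ) + 2) * al := by push_cast; ring
    rw [e]
  have B : ⌊Int.fract y + (j:ℝ) * al⌋ = ⌊(((i + j:ℕ):ℝ) + 1) * al⌋ - ⌊y⌋ := by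
    rw [fract_floor]
    have e : y + (j:ℝ) * al = (((i + j:ℕ):ℝ) + 1) * al := by push_cast; ring
    rw [e]
  unfold tw letterF
  rw [A, B]
  exact decide_eq_decide.mpr (by omega)

/-- floor decomposition via thresholds -/
lemma FL {x : ℝ} (hx0 : 0 ≤ x) (hx1 : x < 1) (j : ℕ) :
    ⌊x + (j:ℝ) * al⌋ = ⌊(j:ℝ) * al⌋ + (if ee j ≤ x then 1 else 0) := by
  have h : x + (j:ℝ) * al = (x + Int.fract ((j:ℝ) * al)) + (⌊(j:ℝ)*al⌋ : ℝ) := by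
    have := Int.floor_add_fract ((j:ℝ) * al); linarith
  rw [h, Int.floor_add_intCast]
  have hf0 := Int.fract_nonneg ((j:ℝ) * al)
  have hf1 := Int.fract_lt_one ((j:ℝ) * al)
  by_cases hc : ee j ≤ x
  · rw [if_pos hc]
    have h1 : ⌊x + Int.fract ((j:ℝ) * al)⌋ = 1 := by
      rw [Int.floor_eq_iff]
      unfold ee at hc
      constructor <;> push_cast <;> linarith
    omega
  · rw [if_neg hc]
    push_neg at hc
    unfold ee at hc
    have h1 : ⌊x + Int.fract ((j:ℝ) * al)⌋ = 0 := by
      rw [Int.floor_eq_zero_iff]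
      constructor <;> [linarith; linarith]
    omega

lemma class_iff (n : ℕ) {x y : ℝ} (hx0 : 0 ≤ x) (hx1 : x < 1) (hy0 : 0 ≤ y) (hy1 : y < 1) :
    V n x = V n y ↔ ∀ j, 1 ≤ j → j ≤ n → (ee j ≤ x ↔ ee j ≤ y) := by
  unfold V
  rw [List.map_inj_left]
  constructor
  · intro h
    -- first, floors agree
    have hfl : ∀ j, j ≤ n → ⌊x + (j:ℝ) * al⌋ = ⌊y + (j:ℝ) * al⌋ := by
      intro j
      induction j with
      | zero =>
        intro _
        norm_num
        rw [Int.floor_eq_zero_iff.mpr ⟨hx0, hx1⟩, Int.floor_eq_zero_iff.mpr ⟨hy0, hy1⟩]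
      | succ i ih =>
        intro hle
        have hi := ih (by omega)
        have hlet := h i (List.mem_range.mpr (by omega))
        unfold letterF at hlet
        have hiff := decide_eq_decide.mp hlet
        have hmono : ∀ z : ℝ, ⌊z + (i:ℝ) * al⌋ ≤ ⌊z + ((i:ℝ) + 1) * al⌋ ∧
            ⌊z + ((i:ℝ) + 1) * al⌋ ≤ ⌊z + (i:ℝ) * al⌋ + 1 := by
          intro z
          constructor
          · exact Int.floor_le_floor (by nlinarith [al_pos])
          · have : z + ((i:ℝ) + 1) * al ≤ (z + (i:ℝ) * al) + 1 := by nlinarith [al_lt_one, al_pos]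
            calc ⌊z + ((i:ℝ) + 1) * al⌋ ≤ ⌊(z + (i:ℝ) * al) + 1⌋ := Int.floor_le_floor this
              _ = ⌊z + (i:ℝ) * al⌋ + 1 := by rw [show ((1:ℝ)) = ((1:ℤ):ℝ) from by norm_num, Int.floor_add_intCast]
        obtain ⟨m1x, m2x⟩ := hmono x
        obtain ⟨m1y, m2y⟩ := hmono y
        have e : ((i+1:ℕ):ℝ) = (i:ℝ) + 1 := by push_cast; ring
        rw [e]
        by_cases hc : ⌊x + ((i:ℝ) + 1) * al⌋ = ⌊x + (i:ℝ) * al⌋ + 1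
        · rw [hiff.mp hc] at *; omega
        · have := fun hh => hc (hiff.mpr hh); omega
    intro j h1 hj
    have hfx := FL hx0 hx1 j
    have hfy := FL hy0 hy1 j
    have := hfl j hj
    by_cases hcx : ee j ≤ x <;> by_cases hcy : ee j ≤ y <;>
      simp [hcx, hcy] at hfx hfy <;> [tauto; omega; omega; tauto]
  · intro h j hj
    rw [List.mem_range] at hj
    unfold letterF
    have key : ∀ m, m ≤ n → ⌊x + (m:ℝ) * al⌋ = ⌊y + (m:ℝ) * al⌋ := by
      intro m hm
      have hfx := FL hx0 hx1 m
      have hfy := FL hy0 hy1 m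
      rcases Nat.eq_zero_or_pos m with h0 | hpos
      · subst h0
        have hne : ¬ (ee 0 ≤ x) := by unfold ee; norm_num; linarith
        have hne' : ¬ (ee 0 ≤ y) := by unfold ee; norm_num; linarith
        simp only [if_neg hne, if_neg hne'] at hfx hfy
        omega
      · have := h m hpos hm
        by_cases hc : ee m ≤ x
        · rw [if_pos hc] at hfx; rw [if_pos (this.mp hc)] at hfy; omega
        · rw [if_neg hc] at hfx; rw [if_neg (fun hh => hc (this.mpr hh))] at hfy; omega
    have k1 := key j (by omega)
    have k2 := key (j+1) (by omega)
    have e : ((j+1:ℕ):ℝ) = (j:ℝ) + 1 := by push_cast; ring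
    rw [e] at k2
    rw [k1, k2]


lemma dense_fract (a b : ℝ) (ha : 0 ≤ a) (hab : a < b) (hb : b ≤ 1) :
    ∃ i : ℕ, a < Int.fract (((i:ℝ) + 1) * al) ∧ Int.fract (((i:ℝ) + 1) * al) < b := by
  obtain ⟨k0, hk0⟩ := exists_pow_lt_of_lt_one (by linarith : (0:ℝ) < b - a) al_lt_one
  set δ := al ^ (2*k0+1) with hδ
  have hδpos : 0 < δ := pow_pos al_pos _
  have hδlt : δ < b - a :=
    lt_of_le_of_lt (pow_le_pow_of_le_one (le_of_lt al_pos) (le_of_lt al_lt_one) (by omega)) hk0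
  set q := Nat.fib (2*k0+1) with hq
  have hq1 : 1 ≤ q := Nat.fib_pos.mpr (by omega)
  have hfq : (q:ℝ) * al = (Nat.fib (2*k0) : ℝ) + δ := by
    have h := fib_al (2*k0)
    have he : ((-1:ℝ))^(2*k0) = 1 := by rw [pow_mul]; norm_num
    rw [he, one_mul] at h
    exact h
  set m := ⌊a / δ⌋₊ + 1 with hm
  have hm1 : 1 ≤ m := by omega
  have hma : a < (m:ℝ) * δ := by
    have h := Nat.lt_floor_add_one (a / δ)
    calc a = (a/δ) * δ := by field_simp
      _ < ((⌊a / δ⌋₊:ℝ) + 1) * δ := mul_lt_mul_of_pos_right h hδpos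
      _ = (m:ℝ) * δ := by rw [hm]; push_cast; ring
  have hmb : (m:ℝ) * δ < b := by
    have h1 : (⌊a / δ⌋₊:ℝ) ≤ a / δ := Nat.floor_le (by positivity)
    have h2 : (m:ℝ) * δ ≤ a + δ := by
      have e : (m:ℝ) = (⌊a/δ⌋₊:ℝ) + 1 := by rw [hm]; push_cast; ring
      rw [e, add_mul, one_mul]
      have h3 := mul_le_mul_of_nonneg_right h1 (le_of_lt hδpos)
      rw [div_mul_cancel₀ a (ne_of_gt hδpos)] at h3
      linarith
    linarith
  have hmq1 : 1 ≤ m * q := Nat.one_le_iff_ne_zero.mpr (by positivity)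
  clear_value δ q m
  refine ⟨m * q - 1, ?_⟩
  have hiq : ((m * q - 1 : ℕ):ℝ) + 1 = (m:ℝ) * (q:ℝ) := by
    have e : m * q - 1 + 1 = m * q := by omega
    rw [show ((m * q - 1 : ℕ):ℝ) + 1 = ((m * q - 1 + 1 : ℕ):ℝ) from by push_cast; ring, e]
    push_cast; ring
  rw [hiq]
  have hcalc : ((m:ℝ) * (q:ℝ)) * al = (m:ℝ) * δ + ((m * Nat.fib (2*k0) : ℕ):ℝ) := by
    push_cast
    linear_combination (m:ℝ) * hfq
  have hfract : Int.fract (((m:ℝ) * (q:ℝ)) * al) = (m:ℝ) * δ := by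
    rw [hcalc, Int.fract_add_natCast, Int.fract_eq_self.mpr ⟨by positivity, by linarith⟩]
  rw [hfract]
  exact ⟨hma, hmb⟩

lemma ee_pos {j : ℕ} (hj : 1 ≤ j) : 0 < ee j := by
  have := Int.fract_lt_one ((j:ℝ) * al)
  unfold ee; linarith

lemma ee_lt_one {j : ℕ} (hj : 1 ≤ j) : ee j < 1 := by
  have h0 : Int.fract ((j:ℝ) * al) ≠ 0 := by
    intro h
    have := Int.floor_add_fract ((j:ℝ) * al)
    rw [h, add_zero] at this
    exact al_nz j (by omega) ⌊(j:ℝ) * al⌋ this.symm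
  have := Int.fract_nonneg ((j:ℝ) * al)
  unfold ee
  rcases lt_of_le_of_ne this (Ne.symm h0) with h
  linarith

lemma TT_mem_Ico {n : ℕ} {t : ℝ} (ht : t ∈ TT n) : 0 ≤ t ∧ t < 1 := by
  unfold TT at ht
  rcases Finset.mem_insert.mp ht with h | h
  · subst h; norm_num
  · obtain ⟨j, hj, rfl⟩ := Finset.mem_image.mp h
    have hj1 : 1 ≤ j := (Finset.mem_Icc.mp hj).1
    exact ⟨le_of_lt (ee_pos hj1), ee_lt_one hj1⟩

lemma ee_mem_TT {n j : ℕ} (h1 : 1 ≤ j) (h2 : j ≤ n) : ee j ∈ TT n := by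
  unfold TT
  exact Finset.mem_insert_of_mem (Finset.mem_image_of_mem ee (Finset.mem_Icc.mpr ⟨h1, h2⟩))

lemma zero_mem_TT (n : ℕ) : (0:ℝ) ∈ TT n := Finset.mem_insert_self 0 _

lemma TT_card (n : ℕ) : (TT n).card = n + 1 := by
  unfold TT
  rw [Finset.card_insert_of_notMem, Finset.card_image_of_injOn, Nat.card_Icc]
  · omega
  · intro j hj k hk hjk
    by_contra hne
    have hj1 : 1 ≤ j := (Finset.mem_Icc.mp hj).1
    have hk1 : 1 ≤ k := (Finset.mem_Icc.mp hk).1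
    have hfr : Int.fract ((j:ℝ) * al) = Int.fract ((k:ℝ) * al) := by
      unfold ee at hjk; linarith
    rcases Nat.lt_or_ge j k with hlt | hge
    · have hffj := Int.floor_add_fract ((j:ℝ) * al)
      have hffk := Int.floor_add_fract ((k:ℝ) * al)
      have : ((k - j : ℕ):ℝ) * al = ((⌊(k:ℝ)*al⌋ - ⌊(j:ℝ)*al⌋ : ℤ):ℝ) := by
        have e : ((k - j : ℕ):ℝ) = (k:ℝ) - (j:ℝ) := by
          have : j ≤ k := by omega
          push_cast [this]; ring
        rw [e]; push_cast; nlinarith [hfr]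
      exact al_nz (k - j) (by omega) _ this
    · have hlt : k < j := by omega
      have : ((j - k : ℕ):ℝ) * al = ((⌊(j:ℝ)*al⌋ - ⌊(k:ℝ)*al⌋ : ℤ):ℝ) := by
        have e : ((j - k : ℕ):ℝ) = (j:ℝ) - (k:ℝ) := by
          have : k ≤ j := by omega
          push_cast [this]; ring
        have hffj := Int.floor_add_fract ((j:ℝ) * al)
        have hffk := Int.floor_add_fract ((k:ℝ) * al)
        rw [e]; push_cast; nlinarith [hfr]
      exact al_nz (j - k) (by omega) _ this
  · intro h
    obtain ⟨j, hj, hje⟩ := Finset.mem_image.mp h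
    have hj1 : 1 ≤ j := (Finset.mem_Icc.mp hj).1
    exact absurd hje.symm (ne_of_lt (ee_pos hj1))

lemma exists_rep (n : ℕ) (x : ℝ) (hx0 : 0 ≤ x) :
    ∃ s ∈ TT n, s ≤ x ∧ ∀ u ∈ TT n, (u ≤ x ↔ u ≤ s) := by
  classical
  set F := (TT n).filter (· ≤ x) with hF
  have hne : F.Nonempty := ⟨0, Finset.mem_filter.mpr ⟨zero_mem_TT n, hx0⟩⟩
  have hmem := Finset.mem_filter.mp (F.max'_mem hne)
  refine ⟨F.max' hne, hmem.1, hmem.2, ?_⟩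
  intro u hu
  constructor
  · intro h; exact F.le_max' u (Finset.mem_filter.mpr ⟨hu, h⟩)
  · intro h; exact le_trans h hmem.2

lemma exists_pt (n : ℕ) (t : ℝ) (ht : t ∈ TT n) :
    ∃ i : ℕ, (∀ u ∈ TT n, (u ≤ t ↔ u ≤ Int.fract (((i:ℝ) + 1) * al))) := by
  classical
  obtain ⟨ht0, ht1⟩ := TT_mem_Ico ht
  set G := (TT n).filter (t < ·) with hG
  by_cases hne : G.Nonempty
  · set b := G.min' hne with hb
    have hmem := Finset.mem_filter.mp (G.min'_mem hne)
    have htb : t < b := hmem.2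
    have hb1 : b ≤ 1 := le_of_lt (TT_mem_Ico hmem.1).2
    obtain ⟨i, hi1, hi2⟩ := dense_fract t b ht0 htb hb1
    refine ⟨i, fun u hu => ?_⟩
    constructor
    · intro h; linarith
    · intro h
      by_contra hc
      push_neg at hc
      have : b ≤ u := G.min'_le u (Finset.mem_filter.mpr ⟨hu, hc⟩)
      linarith
  · obtain ⟨i, hi1, hi2⟩ := dense_fract t 1 ht0 ht1 le_rfl
    refine ⟨i, fun u hu => ?_⟩
    constructor
    · intro h; linarith
    · intro h
      by_contra hc
      push_neg at hc
      exact hne ⟨u, Finset.mem_filter.mpr ⟨hu, hc⟩⟩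

/-- The complexity function of the infinite Fibonacci word
satisfies p(n) = n + 1 for all n ≥ 1. -/
theorem fibWord_complexity (n : ℕ) (hn : 1 ≤ n) :
    Set.ncard {l : List Bool |
      ∃ i : ℕ, l = (List.range n).map fun j => fibWord (i + j)} = n + 1 := by
  have hw : ∀ i : ℕ, ((List.range n).map fun j => fibWord (i + j))
      = V n (Int.fract (((i:ℝ) + 1) * al)) := by
    intro i
    rw [← w_eq n i]
    exact List.map_congr_left (fun j _ => fibWord_eq_tw (i + j))
  have hset : {l : List Bool | ∃ i : ℕ, l = (List.range n).map fun j => fibWord (i + j)}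
      = V n '' (TT n : Set ℝ) := by
    ext l
    simp only [Set.mem_setOf_eq, Set.mem_image, Finset.mem_coe]
    constructor
    · rintro ⟨i, rfl⟩
      rw [hw i]
      set x := Int.fract (((i:ℝ) + 1) * al) with hx
      have hx0 : 0 ≤ x := Int.fract_nonneg _
      have hx1 : x < 1 := Int.fract_lt_one _
      obtain ⟨s, hsT, hsle, hiff⟩ := exists_rep n x hx0
      obtain ⟨hs0, hs1⟩ := TT_mem_Ico hsT
      exact ⟨s, hsT, ((class_iff n hx0 hx1 hs0 hs1).mpr
        (fun j h1 h2 => hiff (ee j) (ee_mem_TT h1 h2))).symm⟩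
    · rintro ⟨s, hsT, rfl⟩
      obtain ⟨hs0, hs1⟩ := TT_mem_Ico hsT
      obtain ⟨i, hiff⟩ := exists_pt n s hsT
      refine ⟨i, ?_⟩
      rw [hw i]
      exact (class_iff n hs0 hs1 (Int.fract_nonneg _) (Int.fract_lt_one _)).mpr
        (fun j h1 h2 => hiff (ee j) (ee_mem_TT h1 h2))
  rw [hset]
  have key : ∀ s u, s ∈ TT n → u ∈ TT n → s < u → V n s = V n u → False := by
    intro s u hs hu hlt heq
    obtain ⟨hs0, hs1⟩ := TT_mem_Ico hs
    obtain ⟨hu0, hu1⟩ := TT_mem_Ico hu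
    have hune : u ≠ 0 := by linarith
    have : ∃ j, 1 ≤ j ∧ j ≤ n ∧ u = ee j := by
      unfold TT at hu
      rcases Finset.mem_insert.mp hu with h | h
      · exact absurd h hune
      · obtain ⟨j, hj, rfl⟩ := Finset.mem_image.mp h
        obtain ⟨h1, h2⟩ := Finset.mem_Icc.mp hj
        exact ⟨j, h1, h2, rfl⟩
    obtain ⟨j, h1, h2, rfl⟩ := this
    have := ((class_iff n hs0 hs1 hu0 hu1).mp heq j h1 h2).mpr le_rfl
    linarith
  have hinj : Set.InjOn (V n) (TT n : Set ℝ) := by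
    intro s hs u hu heq
    rcases lt_trichotomy s u with hlt | he | hlt
    · exact absurd heq (fun h => key s u hs hu hlt h)
    · exact he
    · exact absurd heq.symm (fun h => key u s hu hs hlt h)
  rw [Set.ncard_image_of_injOn hinj, Set.ncard_coe_finset, TT_card]
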